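/- (Luxemburg–Moore–Veksler) Let A be a lattice ideal in a vector lattice X. Then the quotient X/A, pre-ordered by the image wedge [X₊] of the positive cone X₊ under the quotient map X → X/A, is Archimedean if and only if A is ru-closed in X. -/

import Mathlib

/-- A wedge in a real vector space: closed under addition and nonnegative scaling. -/
def IsWedge {V : Type*} [AddCommGroup V] [Module ℝ V] (W : Set V) : Prop :=
  (∀ x ∈ W, ∀ y ∈ W, x + y ∈ W) ∧ ∀ t : ℝ, 0 ≤ t → ∀ x ∈ W, t • x ∈ W

/-- Relative uniform convergence of the sequence `x` to `l`, with respect to the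
positive wedge `P`: for some regulator `w ∈ P`, for every `m ≥ 1` eventually
`±(x k − l) ≤ (1/m)·w` (inequalities expressed via membership in `P`). -/
def RuConv {V : Type*} [AddCommGroup V] [Module ℝ V] (P : Set V) (x : ℕ → V) (l : V) : Prop :=
  ∃ w ∈ P, ∀ m : ℕ, 1 ≤ m → ∃ N : ℕ, ∀ k ≥ N,
    (1 / (m : ℝ)) • w - (x k - l) ∈ P ∧ (1 / (m : ℝ)) • w + (x k - l) ∈ P

/-- A set `S` is ru-closed if it contains the limits of all ru-convergent sequences in `S`. -/
def RuClosed {V : Type*} [AddCommGroup V] [Module ℝ V] (P : Set V) (S : Set V) : Prop :=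
  ∀ (x : ℕ → V) (l : V), (∀ n, x n ∈ S) → RuConv P x l → l ∈ S

/-- `S′_ru`: the set of limits of ru-convergent sequences in `S`. -/
def ruDeriv {V : Type*} [AddCommGroup V] [Module ℝ V] (P : Set V) (S : Set V) : Set V :=
  {l | ∃ x : ℕ → V, (∀ n, x n ∈ S) ∧ RuConv P x l}

/-- The τ_ru-closure of `S`: the smallest ru-closed set containing `S`. -/
def ruClosure {V : Type*} [AddCommGroup V] [Module ℝ V] (P : Set V) (S : Set V) : Set V :=
  ⋂₀ {C : Set V | S ⊆ C ∧ RuClosed P C}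

section Helpers


variable {X : Type*} [Lattice X] [AddCommGroup X]
  [CovariantClass X X (· + ·) (· ≤ ·)] [Module ℝ X]

private lemma lmv_smul_mono (hsmul : ∀ t : ℝ, 0 ≤ t → ∀ x : X, 0 ≤ x → 0 ≤ t • x)
    {t : ℝ} (ht : 0 ≤ t) {a b : X} (h : a ≤ b) : t • a ≤ t • b := by
  have h2 := hsmul t ht (b - a) (sub_nonneg.mpr h)
  rw [smul_sub] at h2
  exact sub_nonneg.mp h2

private lemma lmv_smul_sup (hsmul : ∀ t : ℝ, 0 ≤ t → ∀ x : X, 0 ≤ x → 0 ≤ t • x)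
    {t : ℝ} (ht : 0 < t) (a b : X) : t • (a ⊔ b) = (t • a) ⊔ (t • b) := by
  refine le_antisymm ?_ (sup_le (lmv_smul_mono hsmul ht.le le_sup_left)
    (lmv_smul_mono hsmul ht.le le_sup_right))
  have h1 : a ⊔ b ≤ t⁻¹ • ((t • a) ⊔ (t • b)) := by
    refine sup_le ?_ ?_
    · have := lmv_smul_mono hsmul (inv_pos.mpr ht).le (le_sup_left : t • a ≤ (t • a) ⊔ (t • b))
      rwa [inv_smul_smul₀ ht.ne'] at this
    · have := lmv_smul_mono hsmul (inv_pos.mpr ht).le (le_sup_right : t • b ≤ (t • a) ⊔ (t • b))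
      rwa [inv_smul_smul₀ ht.ne'] at this
  have := lmv_smul_mono hsmul ht.le h1
  rwa [smul_inv_smul₀ ht.ne'] at this

private lemma lmv_abs_nonneg (hsmul : ∀ t : ℝ, 0 ≤ t → ∀ x : X, 0 ≤ x → 0 ≤ t • x)
    (a : X) : 0 ≤ |a| := by
  have h1 : (0 : X) ≤ |a| + |a| := by
    have := add_le_add (le_abs_self a) (neg_le_abs a)
    simpa using this
  have h2 := hsmul (1/2) (by norm_num) (|a| + |a|) h1
  have h3 : (1/2 : ℝ) • (|a| + |a|) = |a| := by
    rw [smul_add, ← add_smul]; norm_num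
  rwa [h3] at h2

end Helpers

/-- main -/
theorem quotient_archimedean_iff_ideal_ruClosed {X : Type*}
    [Lattice X] [AddCommGroup X] [CovariantClass X X (· + ·) (· ≤ ·)]
    [Module ℝ X] (hsmul : ∀ t : ℝ, 0 ≤ t → ∀ x : X, 0 ≤ x → 0 ≤ t • x)
    (A : Submodule ℝ X) (hA : ∀ a ∈ A, ∀ x : X, |x| ≤ |a| → x ∈ A) :
    (∀ ξ η : X ⧸ A, η ∈ A.mkQ '' {x : X | 0 ≤ x} →
        (∀ n : ℕ, η - n • ξ ∈ A.mkQ '' {x : X | 0 ≤ x}) →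
        -ξ ∈ A.mkQ '' {x : X | 0 ≤ x}) ↔
      RuClosed {x : X | 0 ≤ x} (A : Set X) := by
  constructor
  · -- Archimedean → ru-closed
    intro hArch x l hx hconv
    obtain ⟨w, hw, h⟩ := hconv
    have hw0 : (0 : X) ≤ w := hw
    -- key : for any sign s ∈ {1,-1}, [w] - n • (s • [l]) ∈ image
    have key : ∀ (s : ℝ), s = 1 ∨ s = -1 → ∀ n : ℕ,
        A.mkQ w - (n : ℝ) • (s • A.mkQ l) ∈ A.mkQ '' {x : X | 0 ≤ x} := by
      intro s hs n
      rcases Nat.eq_zero_or_pos n with h0 | hn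
      · subst h0; simp only [Nat.cast_zero, zero_smul, sub_zero]
        exact ⟨w, hw0, rfl⟩
      · obtain ⟨N, hN⟩ := h n hn
        obtain ⟨hp, hm⟩ := hN N le_rfl
        have hnR : (0 : ℝ) < (n : ℝ) := by exact_mod_cast hn
        -- witness : w + s • (n • (x N - l))
        refine ⟨w + (n : ℝ) • (s • (x N - l)), ?_, ?_⟩
        · -- nonneg: scale (1/n)•w + s•(x N - l) ≥ 0 by n
          have hbase : (0 : X) ≤ (1 / (n : ℝ)) • w + s • (x N - l) := by
            rcases hs with rfl | rfl
            · rw [one_smul]; exact hm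
            · rw [neg_one_smul, ← sub_eq_add_neg]; exact hp
          have := hsmul (n : ℝ) hnR.le _ hbase
          rw [smul_add, smul_smul, mul_one_div, div_self hnR.ne'] at this
          simpa using this
        · have hxN : A.mkQ (x N) = 0 := (Submodule.Quotient.mk_eq_zero A).mpr (hx N)
          simp only [map_add, map_smul, map_sub, hxN, zero_sub, smul_neg]
          abel
    have key1 := hArch (A.mkQ l) (A.mkQ w) ⟨w, hw0, rfl⟩ (by
      intro n
      have := key 1 (Or.inl rfl) n
      rwa [one_smul, Nat.cast_smul_eq_nsmul] at this)
    have key2 := hArch (-(A.mkQ l)) (A.mkQ w) ⟨w, hw0, rfl⟩ (by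
      intro n
      have := key (-1) (Or.inr rfl) n
      rw [neg_one_smul, Nat.cast_smul_eq_nsmul] at this
      exact this)
    obtain ⟨y, hy0, hyl⟩ := key1
    obtain ⟨z, hz0, hzl⟩ := key2
    rw [neg_neg] at hzl
    have hyl' : y + l ∈ A := by
      rw [← Submodule.Quotient.mk_eq_zero A]
      have : A.mkQ (y + l) = 0 := by rw [map_add, hyl]; abel
      simpa using this
    have hzl' : l - z ∈ A := by
      rw [← Submodule.Quotient.mk_eq_zero A]
      have : A.mkQ (l - z) = 0 := by rw [map_sub, hzl]; abel
      simpa using this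
    have hyz : y + z ∈ A := by
      have := A.sub_mem hyl' hzl'
      have e : (y + l) - (l - z) = y + z := by abel
      rwa [e] at this
    have hyA : y ∈ A := by
      refine hA (y + z) hyz y ?_
      rw [abs_of_nonneg hy0, abs_of_nonneg (add_nonneg hy0 hz0)]
      simpa using add_le_add_left hz0 y
    have : (y + l) - y ∈ A := A.sub_mem hyl' hyA
    simpa using this
  · -- ru-closed → Archimedean
    intro hclosed ξ η hη hall
    obtain ⟨x, rfl⟩ := A.mkQ_surjective ξ
    obtain ⟨w, hw0, hwe⟩ := hη
    have hw0 : (0 : X) ≤ w := hw0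
    -- For each n ≥ 1 : ((n:ℝ) • x - w) ⊔ 0 ∈ A
    have hc : ∀ n : ℕ, ((n : ℝ) • x - w) ⊔ 0 ∈ A := by
      intro n
      obtain ⟨y, hy0, hye⟩ := hall n
      have hy0 : (0 : X) ≤ y := hy0
      have haA : w - (n : ℝ) • x - y ∈ A := by
        rw [← Submodule.Quotient.mk_eq_zero A]
        have : A.mkQ (w - (n : ℝ) • x - y) = 0 := by
          rw [map_sub, map_sub, map_smul, hwe, Nat.cast_smul_eq_nsmul, hye]
          abel
        simpa using this
      set a := w - (n : ℝ) • x - y with ha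
      refine hA a haA _ ?_
      have hcnn : (0 : X) ≤ ((n : ℝ) • x - w) ⊔ 0 := le_sup_right
      rw [abs_of_nonneg hcnn]
      refine sup_le ?_ (lmv_abs_nonneg hsmul a)
      -- n•x - w = -a - y ≤ -a ≤ |a|
      have e : (n : ℝ) • x - w = -a - y := by rw [ha]; abel
      rw [e]
      calc -a - y ≤ -a := by simpa using sub_le_self (-a) hy0
        _ ≤ |a| := neg_le_abs a
    -- the approximating sequence
    set d : ℕ → X := fun n => (x - (1 / ((n : ℝ) + 1)) • w) ⊔ 0 with hd
    have hnpos : ∀ n : ℕ, (0 : ℝ) < (n : ℝ) + 1 := fun n => by positivity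
    have hd_mem : ∀ n : ℕ, d n ∈ A := by
      intro n
      have h1 := A.smul_mem (1 / ((n : ℝ) + 1)) (hc (n + 1))
      have e2 : (1 / ((n : ℝ) + 1)) • (((((n + 1 : ℕ) : ℝ)) • x - w) ⊔ 0)
          = d n := by
        rw [lmv_smul_sup hsmul (by positivity), smul_zero, smul_sub, smul_smul]
        push_cast
        rw [one_div_mul_cancel (hnpos n).ne', one_smul]
      rwa [e2] at h1
    have hdw : ∀ n : ℕ, (0 : X) ≤ (1 / ((n : ℝ) + 1)) • w := fun n =>
      hsmul _ (by positivity) w hw0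
    have hd_le : ∀ n : ℕ, d n ≤ x ⊔ 0 := by
      intro n
      exact sup_le_sup_right (by simpa using sub_le_self x (hdw n)) 0
    have hle_d : ∀ n : ℕ, x ⊔ 0 ≤ d n + (1 / ((n : ℝ) + 1)) • w := by
      intro n
      refine sup_le ?_ ?_
      · have : x - (1 / ((n : ℝ) + 1)) • w ≤ d n := le_sup_left
        have h2 := add_le_add_right this ((1 / ((n : ℝ) + 1)) • w)
        simpa [add_comm] using h2
      · exact add_nonneg (le_sup_right) (hdw n)
    -- ru-convergence of d to x ⊔ 0 with regulator w
    have hconv : RuConv {x : X | 0 ≤ x} d (x ⊔ 0) := by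
      refine ⟨w, hw0, ?_⟩
      intro m hm
      refine ⟨m, fun k hk => ?_⟩
      have hmR : (0 : ℝ) < (m : ℝ) := by exact_mod_cast hm
      constructor
      · -- 0 ≤ (1/m)•w - (d k - (x ⊔ 0))
        have h1 : (0 : X) ≤ (x ⊔ 0) - d k := sub_nonneg.mpr (hd_le k)
        have h2 : (0 : X) ≤ (1 / (m : ℝ)) • w := hsmul _ (by positivity) w hw0
        have e : (1 / (m : ℝ)) • w - (d k - (x ⊔ 0))
            = (1 / (m : ℝ)) • w + ((x ⊔ 0) - d k) := by abel
        show (0 : X) ≤ (1 / (m : ℝ)) • w - (d k - (x ⊔ 0))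
        rw [e]; exact add_nonneg h2 h1
      · -- 0 ≤ (1/m)•w + (d k - (x ⊔ 0))
        have h1 : (x ⊔ 0) - d k ≤ (1 / ((k : ℝ) + 1)) • w := by
          have := hle_d k
          exact sub_le_iff_le_add'.mpr (by simpa [add_comm] using this)
        have h2 : (1 / ((k : ℝ) + 1)) • w ≤ (1 / (m : ℝ)) • w := by
          have hle : (1 / ((k : ℝ) + 1)) ≤ 1 / (m : ℝ) := by
            apply one_div_le_one_div_of_le hmR
            have : (m : ℝ) ≤ (k : ℝ) := by exact_mod_cast hk
            linarith
          have := hsmul (1 / (m : ℝ) - 1 / ((k : ℝ) + 1)) (by linarith) w hw0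
          rw [sub_smul] at this
          exact sub_nonneg.mp this
        have h3 : (x ⊔ 0) - d k ≤ (1 / (m : ℝ)) • w := h1.trans h2
        have e : (1 / (m : ℝ)) • w + (d k - (x ⊔ 0))
            = (1 / (m : ℝ)) • w - ((x ⊔ 0) - d k) := by abel
        show (0 : X) ≤ (1 / (m : ℝ)) • w + (d k - (x ⊔ 0))
        rw [e]
        exact sub_nonneg.mpr h3
    have hxp : x ⊔ 0 ∈ A := hclosed d (x ⊔ 0) hd_mem hconv
    refine ⟨(-x) ⊔ 0, le_sup_right, ?_⟩
    have e : (-x) ⊔ 0 = (x ⊔ 0) - x := by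
      rw [sup_sub]; simp [sup_comm]
    have h0 : A.mkQ (x ⊔ 0) = 0 := (Submodule.Quotient.mk_eq_zero A).mpr hxp
    rw [e, map_sub, h0]
    abel
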